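/- arXiv:0904.3827 — 4 statements merged into one kernel-verified Lean document; each statement's English description precedes it below -/
import Mathlib

section
/- There exists a group isomorphism Φ from G onto the group Aut_k(K) of k-automorphisms of K such that for every σ ∈ G and every P ∈ k[x_1,…,x_n], Φ(σ)(aeval α P) = aeval α (σ·P); in particular Φ(σ)(α_i) = α_{σ(i)} for all i. -/
open MvPolynomial Polynomial

variable (k : Type*) {K : Type*} [Field k] [Field K] [Algebra k K] {n : ℕ}

/-- The ideal of `α`-relations. -/
noncomputable def relIdeal (α : Fin n → K) : Ideal (MvPolynomial (Fin n) k) :=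
  RingHom.ker (MvPolynomial.aeval α : MvPolynomial (Fin n) k →ₐ[k] K)

/-- The Galois group of `α` over `k`: permutations stabilizing the ideal of relations. -/
def galoisGroup (α : Fin n → K) : Subgroup (Equiv.Perm (Fin n)) where
  carrier := {σ | MvPolynomial.rename ⇑σ '' (relIdeal k α : Set (MvPolynomial (Fin n) k))
      = (relIdeal k α : Set (MvPolynomial (Fin n) k))}
  one_mem' := by
    have h : ∀ p : MvPolynomial (Fin n) k, rename ⇑(1 : Equiv.Perm (Fin n)) p = p := by
      intro p; simp [Equiv.Perm.coe_one, rename_id]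
    simp only [Set.mem_setOf_eq]
    rw [Set.image_congr' h]
    exact Set.image_id _
  mul_mem' := by
    intro σ τ hσ hτ
    simp only [Set.mem_setOf_eq] at *
    have h : ∀ p : MvPolynomial (Fin n) k,
        rename ⇑(σ * τ) p = rename ⇑σ (rename ⇑τ p) := by
      intro p; rw [rename_rename]; rfl
    rw [Set.image_congr' h]
    calc (fun p => rename ⇑σ (rename ⇑τ p)) '' (relIdeal k α : Set (MvPolynomial (Fin n) k))
        = rename ⇑σ '' (rename ⇑τ '' (relIdeal k α : Set (MvPolynomial (Fin n) k))) :=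
          (Set.image_comp _ _ _)
      _ = _ := by rw [hτ, hσ]
  inv_mem' := by
    intro σ hσ
    simp only [Set.mem_setOf_eq] at *
    conv_lhs => rw [← hσ]
    rw [← Set.image_comp]
    have h : ∀ p : MvPolynomial (Fin n) k,
        (rename ⇑σ⁻¹ ∘ rename ⇑σ) p = p := by
      intro p
      simp only [Function.comp_apply, rename_rename]
      have : (⇑σ⁻¹ ∘ ⇑σ) = id := by
        funext i; simp
      rw [this, rename_id, AlgHom.id_apply]
    rw [Set.image_congr' h]
    exact Set.image_id _


section GalAux

variable {k : Type*} {K : Type*} [Field k] [Field K] [Algebra k K] {n : ℕ}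

/-- Auxiliary: the `k`-algebra endomorphism of `K` induced by a permutation mapping the
ideal of relations into itself. -/
noncomputable def galAlgHom (α : Fin n → K)
    (hs : Function.Surjective (aeval α : MvPolynomial (Fin n) k →ₐ[k] K))
    (σ : Equiv.Perm (Fin n))
    (hσ : ∀ P ∈ relIdeal k α, rename ⇑σ P ∈ relIdeal k α) : K →ₐ[k] K :=
  (Ideal.Quotient.liftₐ (relIdeal k α) (aeval (α ∘ ⇑σ))
    (fun P hP => by
      have h := (RingHom.mem_ker).mp (hσ P hP)
      rw [aeval_rename] at h
      exact h)).comp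
    (Ideal.quotientKerAlgEquivOfSurjective hs).symm.toAlgHom

lemma galAlgHom_aeval (α : Fin n → K)
    (hs : Function.Surjective (aeval α : MvPolynomial (Fin n) k →ₐ[k] K))
    (σ : Equiv.Perm (Fin n))
    (hσ : ∀ P ∈ relIdeal k α, rename ⇑σ P ∈ relIdeal k α) (P : MvPolynomial (Fin n) k) :
    galAlgHom α hs σ hσ (aeval α P) = aeval α (rename ⇑σ P) := by
  have h1 : (Ideal.quotientKerAlgEquivOfSurjective hs).symm (aeval α P)
      = Ideal.Quotient.mk (relIdeal k α) P := by
    apply (Ideal.quotientKerAlgEquivOfSurjective hs).injective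
    rw [AlgEquiv.apply_symm_apply]
    rfl
  rw [galAlgHom]
  erw [AlgHom.comp_apply]
  show Ideal.Quotient.liftₐ (relIdeal k α) _ _ ((Ideal.quotientKerAlgEquivOfSurjective hs).symm (aeval α P)) = _
  erw [h1]
  rw [Ideal.Quotient.liftₐ_apply]
  erw [Ideal.Quotient.lift_mk]
  exact (aeval_rename _ _ _).symm

end GalAux

/-- there is a group isomorphism `Φ : G ≃* Aut_k K` compatible with evaluation. -/
theorem exists_mulEquiv_galoisGroup_aut (α : Fin n → K) (hinj : Function.Injective α)
    (hcoeff : ∀ m : ℕ, (∏ i : Fin n, (Polynomial.X - Polynomial.C (α i)) : K[X]).coeff m ∈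
      (algebraMap k K).range)
    (hgen : Algebra.adjoin k (Set.range α) = ⊤) :
    ∃ Φ : galoisGroup k α ≃* (K ≃ₐ[k] K),
      (∀ (σ : galoisGroup k α) (P : MvPolynomial (Fin n) k),
        Φ σ (MvPolynomial.aeval α P) = MvPolynomial.aeval α (rename ⇑(σ : Equiv.Perm (Fin n)) P)) ∧
      (∀ (σ : galoisGroup k α) (i : Fin n), Φ σ (α i) = α ((σ : Equiv.Perm (Fin n)) i)) := by
  classical
  have hs : Function.Surjective (aeval α : MvPolynomial (Fin n) k →ₐ[k] K) := by
    rw [← AlgHom.range_eq_top, ← Algebra.adjoin_range_eq_range_aeval]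
    exact hgen
  have hsub : ∀ σ : galoisGroup k α, ∀ P ∈ relIdeal k α,
      rename ⇑(σ : Equiv.Perm (Fin n)) P ∈ relIdeal k α := by
    intro σ P hP
    have h : rename ⇑(σ : Equiv.Perm (Fin n)) '' (relIdeal k α : Set (MvPolynomial (Fin n) k))
        = (relIdeal k α : Set (MvPolynomial (Fin n) k)) := σ.2
    have hx : rename ⇑(σ : Equiv.Perm (Fin n)) P
        ∈ rename ⇑(σ : Equiv.Perm (Fin n)) '' (relIdeal k α : Set (MvPolynomial (Fin n) k)) :=
      ⟨P, hP, rfl⟩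
    rwa [h] at hx
  set F : galoisGroup k α → (K →ₐ[k] K) := fun σ => galAlgHom α hs σ (hsub σ) with hFdef
  have hF : ∀ (σ : galoisGroup k α) (P : MvPolynomial (Fin n) k),
      F σ (aeval α P) = aeval α (rename ⇑(σ : Equiv.Perm (Fin n)) P) :=
    fun σ P => galAlgHom_aeval α hs σ (hsub σ) P
  have hFα : ∀ (σ : galoisGroup k α) (i : Fin n),
      F σ (α i) = α ((σ : Equiv.Perm (Fin n)) i) := by
    intro σ i
    have h := hF σ (X i)
    simpa using h
  have hext : ∀ f g : K →ₐ[k] K, (∀ i, f (α i) = g (α i)) → f = g := by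
    intro f g h
    apply AlgHom.ext_of_adjoin_eq_top hgen
    rintro x ⟨i, rfl⟩
    exact h i
  have hcomp : ∀ σ τ : galoisGroup k α, F (σ * τ) = (F σ).comp (F τ) := by
    intro σ τ
    apply hext
    intro i
    rw [AlgHom.comp_apply, hFα, hFα, hFα]
    rfl
  have hone : F 1 = AlgHom.id k K := by
    apply hext
    intro i
    rw [hFα]
    rfl
  set E : galoisGroup k α → (K ≃ₐ[k] K) := fun σ =>
    AlgEquiv.ofAlgHom (F σ) (F σ⁻¹)
      (by rw [← hcomp, mul_inv_cancel, hone])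
      (by rw [← hcomp, inv_mul_cancel, hone]) with hEdef
  have hE : ∀ (σ : galoisGroup k α) (x : K), E σ x = F σ x := fun σ x => rfl
  set Φ : galoisGroup k α →* (K ≃ₐ[k] K) :=
    { toFun := E
      map_one' := by
        apply AlgEquiv.ext
        intro x
        rw [hE, hone]
        rfl
      map_mul' := by
        intro σ τ
        apply AlgEquiv.ext
        intro x
        rw [AlgEquiv.mul_apply, hE, hE, hE, hcomp]
        rfl } with hΦdef
  have hinjΦ : Function.Injective Φ := by
    intro σ τ h
    have hα : ∀ i, α ((σ : Equiv.Perm (Fin n)) i) = α ((τ : Equiv.Perm (Fin n)) i) := by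
      intro i
      rw [← hFα σ i, ← hFα τ i, ← hE, ← hE]
      show Φ σ (α i) = Φ τ (α i)
      rw [h]
    exact Subtype.ext (Equiv.ext fun i => hinj (hα i))
  have key : ∀ (ψ : K ≃ₐ[k] K) (τ : Equiv.Perm (Fin n)), (∀ i, ψ (α i) = α (τ i)) →
      ∀ P ∈ relIdeal k α, rename ⇑τ P ∈ relIdeal k α := by
    intro ψ τ hτ P hP
    simp only [relIdeal, RingHom.mem_ker] at hP ⊢
    rw [aeval_rename]
    have hfun : (α ∘ ⇑τ) = fun i => ψ (α i) := by
      funext i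
      exact (hτ i).symm
    rw [hfun]
    have hca := comp_aeval_apply (f := α) (ψ : K →ₐ[k] K) P
    simp only [AlgHom.coe_coe, AlgEquiv.coe_algHom] at hca
    rw [← hca, hP, map_zero]
  have hsurjΦ : Function.Surjective Φ := by
    intro φ
    obtain ⟨g, hg⟩ : ∃ g : k[X], g.map (algebraMap k K) = ∏ i : Fin n, (Polynomial.X - Polynomial.C (α i)) := by
      rw [show (∃ g : k[X], g.map (algebraMap k K) = ∏ i : Fin n, (Polynomial.X - Polynomial.C (α i))) ↔
          (∏ i : Fin n, (Polynomial.X - Polynomial.C (α i)) : K[X]) ∈ Polynomial.lifts (algebraMap k K) from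
        (Polynomial.mem_lifts _).symm]
      exact (Polynomial.lifts_iff_coeff_lifts _).mpr hcoeff
    have hroot : ∀ i, ∃ j, φ (α i) = α j := by
      intro i
      have h0 : Polynomial.aeval (α i) g = 0 := by
        rw [Polynomial.aeval_def, ← Polynomial.eval_map, hg, Polynomial.eval_prod]
        apply Finset.prod_eq_zero (Finset.mem_univ i)
        simp
      have h1 : Polynomial.aeval (φ (α i)) g = 0 := by
        rw [Polynomial.aeval_algHom_apply φ (α i) g, h0, map_zero]
      rw [Polynomial.aeval_def, ← Polynomial.eval_map, hg, Polynomial.eval_prod] at h1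
      simp only [Polynomial.eval_sub, Polynomial.eval_X, Polynomial.eval_C] at h1
      obtain ⟨j, -, hj⟩ := Finset.prod_eq_zero_iff.mp h1
      exact ⟨j, sub_eq_zero.mp hj⟩
    choose u hu using hroot
    have huinj : Function.Injective u := by
      intro i j hij
      apply hinj
      apply φ.injective
      rw [hu, hu, hij]
    have hubij := Finite.injective_iff_bijective.mp huinj
    set σ0 : Equiv.Perm (Fin n) := Equiv.ofBijective u hubij with hσ0
    have hσ0app : ∀ i, σ0 i = u i := fun i => rfl
    have hφα : ∀ i, φ (α i) = α (σ0 i) := fun i => hu i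
    have hsymmα : ∀ i, φ.symm (α i) = α (σ0⁻¹ i) := by
      intro i
      apply φ.injective
      rw [AlgEquiv.apply_symm_apply, hφα]
      exact congrArg α (Equiv.apply_symm_apply σ0 i).symm
    have hmem : σ0 ∈ galoisGroup k α := by
      show rename ⇑σ0 '' (relIdeal k α : Set (MvPolynomial (Fin n) k))
          = (relIdeal k α : Set (MvPolynomial (Fin n) k))
      apply Set.Subset.antisymm
      · rintro _ ⟨P, hP, rfl⟩
        exact key φ σ0 hφα P hP
      · intro P hP
        refine ⟨rename ⇑σ0⁻¹ P, key φ.symm σ0⁻¹ hsymmα P hP, ?_⟩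
        rw [rename_rename]
        have hid : (⇑σ0 ∘ ⇑σ0⁻¹) = id := by
          funext x
          simp
        rw [hid, rename_id, AlgHom.id_apply]
    refine ⟨⟨σ0, hmem⟩, ?_⟩
    have hFφ : F ⟨σ0, hmem⟩ = (φ : K →ₐ[k] K) := by
      apply hext
      intro i
      rw [hFα]
      exact (hφα i).symm
    apply AlgEquiv.ext
    intro x
    show F ⟨σ0, hmem⟩ x = φ x
    rw [hFφ]
    rfl
  refine ⟨MulEquiv.ofBijective Φ ⟨hinjΦ, hsurjΦ⟩, ?_, ?_⟩
  · intro σ P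
    show F σ (aeval α P) = _
    exact hF σ P
  · intro σ i
    show F σ (α i) = _
    exact hFα σ i
end

section
/- Let H₁ ⊆ H₂ be subgroups of G and β ∈ K with Φ(σ)(β) = β for all σ ∈ H₁. Then {σ ∈ H₂ : Φ(σ)(β) = β} = H₁ if and only if K^{Φ(H₂)}⟮β⟯ = K^{Φ(H₁)}, i.e. β is a primitive element of the fixed field of Φ(H₁) over the fixed field of Φ(H₂); and in that case the image in K[X] of the minimal polynomial of β over K^{Φ(H₂)} equals ∏_{i=1}^{d} (X − Φ(σ_i)(β)), where σ_1,…,σ_d is any complete set of representatives of the left cosets H₂/H₁. -/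
open MvPolynomial Polynomial

variable (k : Type*) {K : Type*} [Field k] [Field K] [Algebra k K] {n : ℕ}

/-- The subfield of `K` fixed by the automorphisms `Φ σ` for `σ ∈ H`. -/
def fixedIF (Φ : Equiv.Perm (Fin n) → (K ≃ₐ[k] K)) (H : Subgroup (Equiv.Perm (Fin n))) :
    IntermediateField k K where
  carrier := {x : K | ∀ σ ∈ H, Φ σ x = x}
  mul_mem' := by
    intro a b ha hb σ hσ
    rw [map_mul, ha σ hσ, hb σ hσ]
  one_mem' := by intro σ hσ; rw [map_one]
  add_mem' := by
    intro a b ha hb σ hσ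
    rw [map_add, ha σ hσ, hb σ hσ]
  zero_mem' := by intro σ hσ; rw [map_zero]
  algebraMap_mem' := by intro r σ hσ; exact (Φ σ).commutes r
  inv_mem' := by
    intro x hx σ hσ
    rw [map_inv₀, hx σ hσ]

section AuxGal
variable {k : Type*} {K : Type*} [Field k] [Field K] [Algebra k K] {n : ℕ}


lemma auxGalois (α : Fin n → K) (hinj : Function.Injective α)
    (hcoeff : ∀ m : ℕ, (∏ i : Fin n, (Polynomial.X - Polynomial.C (α i)) : K[X]).coeff m ∈
      (algebraMap k K).range)
    (hgen : Algebra.adjoin k (Set.range α) = ⊤) :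
    FiniteDimensional k K ∧ IsGalois k K := by
  obtain ⟨f₀, hmap, -, hmonic⟩ := Polynomial.lifts_and_degree_eq_and_monic
    ((Polynomial.lifts_iff_coeff_lifts _).mpr fun m => by
      obtain ⟨c, hc⟩ := hcoeff m; exact ⟨c, hc⟩)
    (monic_prod_of_monic _ _ fun i _ => monic_X_sub_C (α i))
  have hf₀ne : f₀ ≠ 0 := hmonic.ne_zero
  have haev : ∀ x : K, (Polynomial.aeval x) f₀ = ∏ i : Fin n, (x - α i) := by
    intro x
    rw [Polynomial.aeval_def, Polynomial.eval₂_eq_eval_map, hmap, Polynomial.eval_prod]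
    simp
  have hrs : f₀.rootSet K = Set.range α := by
    ext x
    rw [Polynomial.mem_rootSet]
    constructor
    · rintro ⟨-, hx⟩
      rw [haev, Finset.prod_eq_zero_iff] at hx
      obtain ⟨i, -, hi⟩ := hx
      exact ⟨i, (sub_eq_zero.mp hi).symm⟩
    · rintro ⟨i, rfl⟩
      refine ⟨hf₀ne, ?_⟩
      rw [haev]
      exact Finset.prod_eq_zero (Finset.mem_univ i) (by simp)
  haveI hsf : Polynomial.IsSplittingField k K f₀ := by
    constructor
    · rw [hmap]
      exact Polynomial.Splits.prod fun i _ => Polynomial.Splits.X_sub_C _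
    · rw [hrs]; exact hgen
  haveI fd : FiniteDimensional k K := Polynomial.IsSplittingField.finiteDimensional K f₀
  have hsep : f₀.Separable := by
    rw [← Polynomial.separable_map (algebraMap k K), hmap]
    exact Polynomial.separable_prod_X_sub_C_iff.mpr hinj
  exact ⟨fd, IsGalois.of_separable_splitting_field hsep⟩

end AuxGal

set_option maxHeartbeats 1000000 in
/-- characterization of `Stab_{H₂}(β) = H₁` via fixed fields, and the minimal
polynomial of `β` over the fixed field of `H₂` as a product over coset representatives. -/
theorem stab_eq_iff_adjoin_eq_fixed (α : Fin n → K) (hinj : Function.Injective α)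
    (hcoeff : ∀ m : ℕ, (∏ i : Fin n, (Polynomial.X - Polynomial.C (α i)) : K[X]).coeff m ∈
      (algebraMap k K).range)
    (hgen : Algebra.adjoin k (Set.range α) = ⊤)
    (Φ : Equiv.Perm (Fin n) → (K ≃ₐ[k] K))
    (hΦ : ∀ σ ∈ galoisGroup k α, ∀ i : Fin n, Φ σ (α i) = α (σ i))
    (H₁ H₂ : Subgroup (Equiv.Perm (Fin n))) (h12 : H₁ ≤ H₂) (h2G : H₂ ≤ galoisGroup k α)
    (β : K) (hβfix : ∀ σ ∈ H₁, Φ σ β = β) :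
    ((∀ σ : Equiv.Perm (Fin n), (σ ∈ H₂ ∧ Φ σ β = β) ↔ σ ∈ H₁) ↔
      (IntermediateField.adjoin (↥(fixedIF k Φ H₂)) {β}).restrictScalars k = fixedIF k Φ H₁) ∧
    ((∀ σ : Equiv.Perm (Fin n), (σ ∈ H₂ ∧ Φ σ β = β) ↔ σ ∈ H₁) →
      ∀ T : Finset (Equiv.Perm (Fin n)), (∀ σ ∈ T, σ ∈ H₂) →
        (∀ τ ∈ H₂, ∃! σ : Equiv.Perm (Fin n), σ ∈ T ∧ σ⁻¹ * τ ∈ H₁) →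
        (minpoly (↥(fixedIF k Φ H₂)) β).map (algebraMap (↥(fixedIF k Φ H₂)) K) =
          ∏ σ ∈ T, (Polynomial.X - Polynomial.C (Φ σ β))) := by
  classical
  obtain ⟨fd, gal⟩ := auxGalois α hinj hcoeff hgen
  have h1G : H₁ ≤ galoisGroup k α := le_trans h12 h2G
  -- equality of algebra equivs from agreeing on the generators
  have hext : ∀ (φ ψ : K ≃ₐ[k] K), (∀ i, φ (α i) = ψ (α i)) → φ = ψ := by
    intro φ ψ h
    have : (φ : K →ₐ[k] K) = (ψ : K →ₐ[k] K) := by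
      apply AlgHom.ext_of_adjoin_eq_top hgen
      rintro x ⟨i, rfl⟩
      exact h i
    exact AlgEquiv.coe_algHom_injective this
  -- multiplicativity of Φ on the Galois group
  have hmulG : ∀ σ ∈ galoisGroup k α, ∀ τ ∈ galoisGroup k α, ∀ x,
      Φ (σ * τ) x = Φ σ (Φ τ x) := by
    intro σ hσ τ hτ
    have h : Φ (σ * τ) = (Φ τ).trans (Φ σ) := by
      apply hext
      intro i
      rw [hΦ _ (mul_mem hσ hτ) i]
      simp only [AlgEquiv.trans_apply, hΦ τ hτ i, hΦ σ hσ (τ i)]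
      rfl
    intro x; rw [h]; rfl
  have honeG : ∀ x, Φ 1 x = x := by
    have h : Φ 1 = AlgEquiv.refl := by
      apply hext
      intro i
      rw [hΦ 1 (one_mem _) i]
      simp
    intro x; rw [h]; rfl
  have hinvG : ∀ σ ∈ galoisGroup k α, ∀ x, Φ σ⁻¹ (Φ σ x) = x := by
    intro σ hσ x
    rw [← hmulG _ (inv_mem hσ) _ hσ, inv_mul_cancel]
    exact honeG x
  have hΦinj : ∀ σ ∈ galoisGroup k α, ∀ τ ∈ galoisGroup k α, Φ σ = Φ τ → σ = τ := by
    intro σ hσ τ hτ h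
    refine Equiv.ext fun i => hinj ?_
    rw [← hΦ σ hσ i, ← hΦ τ hτ i, h]
  -- the monoid hom on the Galois group and images of subgroups
  let Φ' : (galoisGroup k α) →* (K ≃ₐ[k] K) :=
    MonoidHom.mk' (fun σ => Φ σ.1) (fun σ τ => by
      ext x
      rw [AlgEquiv.mul_apply]
      exact hmulG σ.1 σ.2 τ.1 τ.2 x)
  let im : Subgroup (Equiv.Perm (Fin n)) → Subgroup (K ≃ₐ[k] K) :=
    fun H => Subgroup.map Φ' (H.subgroupOf (galoisGroup k α))
  have hmem_im : ∀ (H : Subgroup (Equiv.Perm (Fin n))), H ≤ galoisGroup k α →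
      ∀ φ : K ≃ₐ[k] K, (φ ∈ im H ↔ ∃ σ ∈ H, Φ σ = φ) := by
    intro H hH φ
    constructor
    · rintro ⟨⟨σ, hσG⟩, hσH, rfl⟩
      exact ⟨σ, hσH, rfl⟩
    · rintro ⟨σ, hσ, rfl⟩
      exact ⟨⟨σ, hH hσ⟩, hσ, rfl⟩
  -- the fixed intermediate field is the fixed field of the image subgroup
  have hfixed : ∀ (H : Subgroup (Equiv.Perm (Fin n))), H ≤ galoisGroup k α →
      fixedIF k Φ H = IntermediateField.fixedField (im H) := by
    intro H hH
    ext x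
    constructor
    · intro hx g
      obtain ⟨σ, hσ, hσg⟩ := (hmem_im H hH g.1).mp g.2
      show g.1 x = x
      rw [← hσg]
      exact hx σ hσ
    · intro hx σ hσ
      exact hx ⟨Φ σ, (hmem_im H hH _).mpr ⟨σ, hσ, rfl⟩⟩
  -- Artin: fixing subgroup of our fixed field is the image subgroup
  have hfixing : ∀ (H : Subgroup (Equiv.Perm (Fin n))), H ≤ galoisGroup k α →
      IntermediateField.fixingSubgroup (fixedIF k Φ H) = im H := by
    intro H hH
    rw [hfixed H hH]
    exact IntermediateField.fixingSubgroup_fixedField (im H)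
  -- an automorphism fixing F₂ pointwise and fixing β fixes the adjoined field
  have hadj : ∀ φ : K ≃ₐ[k] K, (∀ x ∈ fixedIF k Φ H₂, φ x = x) → φ β = β →
      ∀ x ∈ (IntermediateField.adjoin (↥(fixedIF k Φ H₂)) {β}).restrictScalars k, φ x = x := by
    intro φ hφF hφβ x hx
    let Fφ : IntermediateField k K :=
      { carrier := {y : K | φ y = y}
        mul_mem' := fun ha hb => by simp only [Set.mem_setOf_eq] at *; rw [map_mul, ha, hb]
        one_mem' := by simp only [Set.mem_setOf_eq]; rw [map_one]
        add_mem' := fun ha hb => by simp only [Set.mem_setOf_eq] at *; rw [map_add, ha, hb]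
        zero_mem' := by simp only [Set.mem_setOf_eq]; rw [map_zero]
        algebraMap_mem' := fun r => φ.commutes r
        inv_mem' := fun y hy => by simp only [Set.mem_setOf_eq] at *; rw [map_inv₀, hy] }
    have hle : (IntermediateField.adjoin (↥(fixedIF k Φ H₂)) {β}).restrictScalars k ≤ Fφ := by
      rw [IntermediateField.restrictScalars_adjoin]
      apply IntermediateField.adjoin_le_iff.mpr
      rintro y (hy | hy)
      · exact hφF y hy
      · rw [Set.mem_singleton_iff] at hy; subst hy; exact hφβ
    exact hle hx
  -- membership of F₂ inside the adjoined field
  have hF2le : ∀ x ∈ fixedIF k Φ H₂,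
      x ∈ (IntermediateField.adjoin (↥(fixedIF k Φ H₂)) {β}).restrictScalars k := by
    intro x hx
    exact (IntermediateField.adjoin (↥(fixedIF k Φ H₂)) {β}).algebraMap_mem ⟨x, hx⟩
  have hβmem : β ∈ (IntermediateField.adjoin (↥(fixedIF k Φ H₂)) {β}).restrictScalars k := by
    rw [IntermediateField.mem_restrictScalars]
    exact IntermediateField.subset_adjoin _ _ rfl
  constructor
  · constructor
    · intro hstab
      have hEfix : IntermediateField.fixingSubgroup
          ((IntermediateField.adjoin (↥(fixedIF k Φ H₂)) {β}).restrictScalars k) = im H₁ := by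
        ext φ
        rw [IntermediateField.mem_fixingSubgroup_iff]
        constructor
        · intro hφ
          have hφF₂ : φ ∈ IntermediateField.fixingSubgroup (fixedIF k Φ H₂) := by
            rw [IntermediateField.mem_fixingSubgroup_iff]
            intro x hx
            exact hφ x (hF2le x hx)
          rw [hfixing H₂ h2G] at hφF₂
          obtain ⟨σ, hσ, rfl⟩ := (hmem_im H₂ h2G φ).mp hφF₂
          refine (hmem_im H₁ h1G _).mpr ⟨σ, ?_, rfl⟩
          exact (hstab σ).mp ⟨hσ, hφ β hβmem⟩
        · intro hφ
          obtain ⟨σ, hσ, rfl⟩ := (hmem_im H₁ h1G φ).mp hφ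
          exact hadj (Φ σ) (fun x hx => hx σ (h12 hσ)) (hβfix σ hσ)
      calc (IntermediateField.adjoin (↥(fixedIF k Φ H₂)) {β}).restrictScalars k
          = IntermediateField.fixedField (IntermediateField.fixingSubgroup
              ((IntermediateField.adjoin (↥(fixedIF k Φ H₂)) {β}).restrictScalars k)) :=
            (IsGalois.fixedField_fixingSubgroup _).symm
        _ = IntermediateField.fixedField (im H₁) := by rw [hEfix]
        _ = fixedIF k Φ H₁ := (hfixed H₁ h1G).symm
    · intro hE σ
      constructor
      · rintro ⟨hσ2, hσβ⟩
        have hmem : Φ σ ∈ im H₁ := by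
          rw [← hfixing H₁ h1G, IntermediateField.mem_fixingSubgroup_iff]
          intro x hx
          rw [← hE] at hx
          exact hadj (Φ σ) (fun y hy => hy σ hσ2) hσβ x hx
        obtain ⟨τ, hτ, hτσ⟩ := (hmem_im H₁ h1G _).mp hmem
        rwa [hΦinj τ (h1G hτ) σ (h2G hσ2) hτσ] at hτ
      · intro hσ1
        exact ⟨h12 hσ1, hβfix σ hσ1⟩
  · intro hstab T hT hrep
    have hFfix : ∀ σ ∈ H₂, ∀ x : ↥(fixedIF k Φ H₂), Φ σ (x : K) = (x : K) :=
      fun σ hσ x => x.2 σ hσ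
    haveI : FiniteDimensional (↥(fixedIF k Φ H₂)) K := FiniteDimensional.right k _ K
    have hβint : IsIntegral (↥(fixedIF k Φ H₂)) β := Algebra.IsIntegral.isIntegral β
    set P : K[X] := ∏ σ ∈ T, (Polynomial.X - Polynomial.C (Φ σ β)) with hP
    have hcos : ∀ ρ ∈ H₂, ∀ δ ∈ H₁, Φ (ρ * δ) β = Φ ρ β := by
      intro ρ hρ δ hδ
      rw [hmulG ρ (h2G hρ) δ (h1G hδ), hβfix δ hδ]
    have hPmap : ∀ τ ∈ H₂, P.map ((Φ τ).toAlgHom.toRingHom) = P := by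
      intro τ hτ
      rw [hP, Polynomial.map_prod]
      simp only [Polynomial.map_sub, Polynomial.map_X, Polynomial.map_C]
      refine Finset.prod_bij' (fun σ hσ => (hrep (τ * σ) (mul_mem hτ (hT σ hσ))).choose)
        (fun σ hσ => (hrep (τ⁻¹ * σ) (mul_mem (inv_mem hτ) (hT σ hσ))).choose)
        (fun σ hσ => (hrep (τ * σ) (mul_mem hτ (hT σ hσ))).choose_spec.1.1)
        (fun σ hσ => (hrep (τ⁻¹ * σ) (mul_mem (inv_mem hτ) (hT σ hσ))).choose_spec.1.1)
        ?_ ?_ ?_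
      · intro σ hσ
        have hspec := (hrep (τ * σ) (mul_mem hτ (hT σ hσ))).choose_spec
        set ρ := (hrep (τ * σ) (mul_mem hτ (hT σ hσ))).choose with hρdef
        have h1 : σ⁻¹ * (τ⁻¹ * ρ) ∈ H₁ := by
          have := inv_mem hspec.1.2
          simpa [mul_assoc] using this
        exact ((hrep (τ⁻¹ * ρ) (mul_mem (inv_mem hτ) (hT ρ hspec.1.1))).choose_spec.2
          σ ⟨hσ, h1⟩).symm
      · intro σ hσ
        have hspec := (hrep (τ⁻¹ * σ) (mul_mem (inv_mem hτ) (hT σ hσ))).choose_spec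
        set ρ := (hrep (τ⁻¹ * σ) (mul_mem (inv_mem hτ) (hT σ hσ))).choose with hρdef
        have h1 : σ⁻¹ * (τ * ρ) ∈ H₁ := by
          have := inv_mem hspec.1.2
          simpa [mul_assoc] using this
        exact ((hrep (τ * ρ) (mul_mem hτ (hT ρ hspec.1.1))).choose_spec.2
          σ ⟨hσ, h1⟩).symm
      · intro σ hσ
        have hspec := (hrep (τ * σ) (mul_mem hτ (hT σ hσ))).choose_spec
        set ρ := (hrep (τ * σ) (mul_mem hτ (hT σ hσ))).choose with hρdef
        have hval : Φ τ (Φ σ β) = Φ ρ β := by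
          rw [← hmulG τ (h2G hτ) σ (h2G (hT σ hσ))]
          have heq : τ * σ = ρ * (ρ⁻¹ * (τ * σ)) := by group
          rw [heq]
          exact hcos ρ (hT ρ hspec.1.1) _ hspec.1.2
        rw [show ((Φ τ).toAlgHom.toRingHom) (Φ σ β) = Φ τ (Φ σ β) from rfl, hval]
    have hcoeffP : ∀ m : ℕ, P.coeff m ∈ fixedIF k Φ H₂ := by
      intro m σ hσ
      conv_rhs => rw [← hPmap σ hσ]
      rw [Polynomial.coeff_map]
      rfl
    have hmonicP : P.Monic := monic_prod_of_monic _ _ fun σ _ => monic_X_sub_C _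
    obtain ⟨Q, hQmap, -, hQmonic⟩ := Polynomial.lifts_and_degree_eq_and_monic
      (show P ∈ Polynomial.lifts (algebraMap (↥(fixedIF k Φ H₂)) K) from
        (Polynomial.lifts_iff_coeff_lifts _).mpr fun m => ⟨⟨P.coeff m, hcoeffP m⟩, rfl⟩)
      hmonicP
    obtain ⟨σ₀, ⟨hσ₀T, hσ₀1⟩, -⟩ := hrep 1 (one_mem H₂)
    have hσ₀H₁ : σ₀ ∈ H₁ := by simpa using inv_mem hσ₀1
    have hPβ : P.eval β = 0 := by
      rw [hP, Polynomial.eval_prod]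
      apply Finset.prod_eq_zero hσ₀T
      rw [Polynomial.eval_sub, Polynomial.eval_X, Polynomial.eval_C, hβfix σ₀ hσ₀H₁, sub_self]
    have hQβ : Polynomial.aeval β Q = 0 := by
      rw [Polynomial.aeval_def, Polynomial.eval₂_eq_eval_map, hQmap]
      exact hPβ
    have hdvd1 : (minpoly (↥(fixedIF k Φ H₂)) β).map (algebraMap (↥(fixedIF k Φ H₂)) K) ∣ P := by
      rw [← hQmap]
      exact Polynomial.map_dvd _ (minpoly.dvd _ _ hQβ)
    have hinjT : ∀ σ ∈ T, ∀ τ ∈ T, Φ σ β = Φ τ β → σ = τ := by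
      intro σ hσ τ hτ heq
      have hσ2 := hT σ hσ
      have hτ2 := hT τ hτ
      have hfixστ : Φ (σ⁻¹ * τ) β = β := by
        rw [hmulG σ⁻¹ (inv_mem (h2G hσ2)) τ (h2G hτ2), ← heq]
        exact hinvG σ (h2G hσ2) β
      have h1 : σ⁻¹ * τ ∈ H₁ := (hstab _).mp ⟨mul_mem (inv_mem hσ2) hτ2, hfixστ⟩
      obtain ⟨ρ, -, hu⟩ := hrep τ hτ2
      exact (hu σ ⟨hσ, h1⟩).trans (hu τ ⟨hτ, by simpa using one_mem H₁⟩).symm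
    have hroots : ∀ σ ∈ T, Polynomial.eval (Φ σ β)
        ((minpoly (↥(fixedIF k Φ H₂)) β).map (algebraMap (↥(fixedIF k Φ H₂)) K)) = 0 := by
      intro σ hσ
      let ψ : K →ₐ[↥(fixedIF k Φ H₂)] K :=
        { toRingHom := (Φ σ).toAlgHom.toRingHom
          commutes' := fun x => hFfix σ (hT σ hσ) x }
      have hψ : Polynomial.aeval (ψ β) (minpoly (↥(fixedIF k Φ H₂)) β) = 0 := by
        rw [Polynomial.aeval_algHom_apply, minpoly.aeval, map_zero]
      calc Polynomial.eval (Φ σ β)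
            ((minpoly (↥(fixedIF k Φ H₂)) β).map (algebraMap (↥(fixedIF k Φ H₂)) K))
          = Polynomial.aeval (Φ σ β) (minpoly (↥(fixedIF k Φ H₂)) β) := by
            rw [Polynomial.aeval_def, Polynomial.eval₂_eq_eval_map]
        _ = 0 := hψ
    have hdvd2 : P ∣ (minpoly (↥(fixedIF k Φ H₂)) β).map (algebraMap (↥(fixedIF k Φ H₂)) K) := by
      rw [hP]
      apply Finset.prod_dvd_of_coprime
      · intro σ hσ τ hτ hne
        exact Polynomial.isCoprime_X_sub_C_of_isUnit_sub
          (sub_ne_zero_of_ne fun h => hne (hinjT σ hσ τ hτ h)).isUnit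
      · intro σ hσ
        exact Polynomial.dvd_iff_isRoot.mpr (hroots σ hσ)
    exact Polynomial.eq_of_monic_of_associated ((minpoly.monic hβint).map _) hmonicP
      (associated_of_dvd_dvd hdvd1 hdvd2)
end

section
/- Let σ ∈ L. If β_{σH} lies in the image of k in K and β_{τH} ≠ β_{σH} for every coset τH ∈ L/H distinct from σH (i.e. β_{σH} is a simple root of the resolvent R that lies in k), then G is contained in the conjugate σHσ⁻¹ of H. -/
open MvPolynomial Polynomial

variable (k : Type*) {K : Type*} [Field k] [Field K] [Algebra k K] {n : ℕ}

/-- if `β_{σH}` is a simple root of the resolvent lying in `k`, then the Galois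
group is contained in the conjugate `σHσ⁻¹`. -/
theorem galoisGroup_le_conj_of_simple_rational_root
    (α : Fin n → K) (hinj : Function.Injective α)
    (hcoeff : ∀ m : ℕ, (∏ i : Fin n, (Polynomial.X - Polynomial.C (α i)) : K[X]).coeff m ∈
      (algebraMap k K).range)
    (hgen : Algebra.adjoin k (Set.range α) = ⊤)
    (H L : Subgroup (Equiv.Perm (Fin n))) (hHL : H ≤ L) (hGL : galoisGroup k α ≤ L)
    (P : MvPolynomial (Fin n) k) (hstab : ∀ σ ∈ L, (rename ⇑σ P = P ↔ σ ∈ H))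
    (β : (↥L ⧸ H.subgroupOf L) → K)
    (hβ : ∀ σ : ↥L, β (QuotientGroup.mk σ) =
      MvPolynomial.aeval α (rename ⇑(σ : Equiv.Perm (Fin n)) P))
    (σ : Equiv.Perm (Fin n)) (hσ : σ ∈ L)
    (hrat : β (QuotientGroup.mk (⟨σ, hσ⟩ : ↥L)) ∈ (algebraMap k K).range)
    (hsimple : ∀ C : ↥L ⧸ H.subgroupOf L, C ≠ QuotientGroup.mk (⟨σ, hσ⟩ : ↥L) →
      β C ≠ β (QuotientGroup.mk (⟨σ, hσ⟩ : ↥L))) :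
    galoisGroup k α ≤ Subgroup.map (MulAut.conj σ).toMonoidHom H := by
  intro τ hτ
  have hτL : τ ∈ L := hGL hτ
  obtain ⟨c, hc⟩ := hrat
  rw [hβ ⟨σ, hσ⟩] at hc
  -- Q := rename σ P - C c is in the relation ideal
  have hQ : rename ⇑σ P - MvPolynomial.C c ∈ relIdeal k α := by
    simp only [relIdeal, RingHom.mem_ker, map_sub, MvPolynomial.aeval_C]
    rw [← hc, sub_self]
  -- apply τ ∈ galoisGroup
  have hτQ : rename ⇑τ (rename ⇑σ P - MvPolynomial.C c) ∈ relIdeal k α := by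
    have : rename ⇑τ (rename ⇑σ P - MvPolynomial.C c) ∈
        rename ⇑τ '' (relIdeal k α : Set (MvPolynomial (Fin n) k)) :=
      Set.mem_image_of_mem _ hQ
    rwa [hτ] at this
  have key : (MvPolynomial.aeval α) (rename ⇑(τ * σ) P) = algebraMap k K c := by
    have h1 : rename ⇑(τ * σ) P = rename ⇑τ (rename ⇑σ P) := by
      rw [rename_rename]; rfl
    have h2 : (MvPolynomial.aeval α) (rename ⇑τ (rename ⇑σ P - MvPolynomial.C c)) = 0 := hτQ
    rw [map_sub, rename_C, map_sub, MvPolynomial.aeval_C, sub_eq_zero] at h2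
    rw [h1, h2]
  have hβeq : β (QuotientGroup.mk (⟨τ * σ, mul_mem hτL hσ⟩ : ↥L)) =
      β (QuotientGroup.mk (⟨σ, hσ⟩ : ↥L)) := by
    rw [hβ ⟨τ * σ, mul_mem hτL hσ⟩, hβ ⟨σ, hσ⟩]
    exact key.trans hc
  have hcoset : (QuotientGroup.mk (⟨τ * σ, mul_mem hτL hσ⟩ : ↥L) : ↥L ⧸ H.subgroupOf L) =
      QuotientGroup.mk (⟨σ, hσ⟩ : ↥L) := by
    by_contra hne
    exact hsimple _ hne hβeq
  rw [QuotientGroup.eq] at hcoset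
  rw [Subgroup.mem_subgroupOf] at hcoset
  have hmem : σ⁻¹ * τ * σ ∈ H := by
    have : ((⟨τ * σ, mul_mem hτL hσ⟩ : ↥L)⁻¹ * ⟨σ, hσ⟩ : ↥L) =
        ((σ⁻¹ * τ * σ)⁻¹ : Equiv.Perm (Fin n)) := by
      push_cast
      group
    rw [this] at hcoset
    exact (inv_mem_iff).mp hcoset
  refine ⟨σ⁻¹ * τ * σ, hmem, ?_⟩
  simp only [MulEquiv.toMonoidHom_eq_coe, MonoidHom.coe_coe, MulAut.conj_apply]
  group
end

section
/- If the map C ↦ β_C from L/H to K is injective, then for every orbit O of the action of G by left multiplication on L/H, the polynomial F_O = ∏_{C ∈ O} (X − β_C) ∈ K[X] is the image under the coefficientwise map k → K of a monic irreducible polynomial of k[X], and R = ∏_O F_O; consequently the multiset of degrees of the monic irreducible factors of R over k equals the multiset of cardinalities of the orbits of G on L/H. -/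
open MvPolynomial Polynomial
open scoped Classical

variable (k : Type*) {K : Type*} [Field k] [Field K] [Algebra k K] {n : ℕ}

section Aux

variable {k}

lemma mem_relIdeal_iff {α : Fin n → K} {p : MvPolynomial (Fin n) k} :
    p ∈ relIdeal k α ↔ MvPolynomial.aeval α p = 0 := Iff.rfl

lemma rename_mem_relIdeal {α : Fin n → K} {σ : Equiv.Perm (Fin n)}
    (hσ : σ ∈ galoisGroup k α) {p : MvPolynomial (Fin n) k} (hp : p ∈ relIdeal k α) :
    rename ⇑σ p ∈ relIdeal k α := by
  have h : rename ⇑σ '' (relIdeal k α : Set (MvPolynomial (Fin n) k))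
      = (relIdeal k α : Set (MvPolynomial (Fin n) k)) := hσ
  have : rename ⇑σ p ∈ rename ⇑σ '' (relIdeal k α : Set (MvPolynomial (Fin n) k)) :=
    ⟨p, hp, rfl⟩
  rwa [h] at this

/-- If a field automorphism realizes the permutation `σ` on the `α i`, then
`σ` belongs to the Galois group. -/
lemma mem_galoisGroup_of_algEquiv {α : Fin n → K} {σ : Equiv.Perm (Fin n)}
    (g : K ≃ₐ[k] K) (hgσ : ∀ i, g (α i) = α (σ i)) : σ ∈ galoisGroup k α := by
  have key : ∀ p : MvPolynomial (Fin n) k,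
      MvPolynomial.aeval α (rename ⇑σ p) = g (MvPolynomial.aeval α p) := by
    intro p
    rw [aeval_rename]
    have h2 : (g.toAlgHom.comp (MvPolynomial.aeval α) :
        MvPolynomial (Fin n) k →ₐ[k] K) = MvPolynomial.aeval fun i => g (α i) :=
      MvPolynomial.comp_aeval _ _
    have h3 : (α ∘ ⇑σ) = fun i => g (α i) := by
      funext i; exact (hgσ i).symm
    rw [h3, ← h2]; rfl
  show rename ⇑σ '' (relIdeal k α : Set (MvPolynomial (Fin n) k))
      = (relIdeal k α : Set (MvPolynomial (Fin n) k))
  apply Set.Subset.antisymm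
  · rintro - ⟨p, hp, rfl⟩
    show MvPolynomial.aeval α (rename ⇑σ p) = 0
    rw [key, mem_relIdeal_iff.mp hp, map_zero]
  · intro p hp
    refine ⟨rename ⇑σ⁻¹ p, ?_, ?_⟩
    · show MvPolynomial.aeval α (rename ⇑σ⁻¹ p) = 0
      apply g.injective
      rw [← key, map_zero]
      have : rename ⇑σ (rename ⇑σ⁻¹ p) = p := by
        rw [rename_rename]
        have : (⇑σ ∘ ⇑σ⁻¹) = id := by funext i; simp
        rw [this, rename_id, AlgHom.id_apply]
      rw [this]
      exact mem_relIdeal_iff.mp hp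
    · rw [rename_rename]
      have : (⇑σ ∘ ⇑σ⁻¹) = id := by funext i; simp
      rw [this, rename_id, AlgHom.id_apply]

lemma g_aeval_eq {α : Fin n → K} {σ : Equiv.Perm (Fin n)}
    (g : K ≃ₐ[k] K) (hgσ : ∀ i, g (α i) = α (σ i)) (p : MvPolynomial (Fin n) k) :
    g (MvPolynomial.aeval α p) = MvPolynomial.aeval α (rename ⇑σ p) := by
  rw [aeval_rename]
  have h2 : (g.toAlgHom.comp (MvPolynomial.aeval α) :
      MvPolynomial (Fin n) k →ₐ[k] K) = MvPolynomial.aeval fun i => g (α i) :=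
    MvPolynomial.comp_aeval _ _
  have h3 : (α ∘ ⇑σ) = fun i => g (α i) := by
    funext i; exact (hgσ i).symm
  rw [h3, ← h2]; rfl

lemma aeval_surjective {α : Fin n → K} (hgen : Algebra.adjoin k (Set.range α) = ⊤) :
    Function.Surjective (MvPolynomial.aeval α : MvPolynomial (Fin n) k →ₐ[k] K) := by
  rw [← AlgHom.range_eq_top, ← Algebra.adjoin_range_eq_range_aeval, hgen]

/-- Every element of the Galois group is realized by a field automorphism. -/
lemma exists_algEquiv_of_mem_galoisGroup [FiniteDimensional k K] {α : Fin n → K}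
    (hgen : Algebra.adjoin k (Set.range α) = ⊤) {σ : Equiv.Perm (Fin n)}
    (hσ : σ ∈ galoisGroup k α) : ∃ g : K ≃ₐ[k] K, ∀ i, g (α i) = α (σ i) := by
  have hsurj := aeval_surjective (k := k) hgen
  set F : MvPolynomial (Fin n) k →ₐ[k] K :=
    (MvPolynomial.aeval α).comp (rename ⇑σ : MvPolynomial (Fin n) k →ₐ[k] _) with hF
  have hvan : ∀ p ∈ RingHom.ker (MvPolynomial.aeval α : MvPolynomial (Fin n) k →ₐ[k] K),
      F p = 0 := by
    intro p hp
    exact mem_relIdeal_iff.mp (rename_mem_relIdeal hσ hp)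
  set Fbar := Ideal.Quotient.liftₐ _ F hvan with hFbar
  set e := Ideal.quotientKerAlgEquivOfSurjective hsurj with he
  set φ : K →ₐ[k] K := Fbar.comp e.symm.toAlgHom with hφ
  have key : ∀ i, φ (α i) = α (σ i) := by
    intro i
    have h1 : e (Ideal.Quotient.mk _ (MvPolynomial.X i)) = α i := by
      show MvPolynomial.aeval α (MvPolynomial.X i) = α i
      simp
    have h2 : e.symm (α i) = Ideal.Quotient.mk _ (MvPolynomial.X i) := by
      rw [← h1, AlgEquiv.symm_apply_apply]
    show Fbar (e.symm (α i)) = α (σ i)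
    rw [h2]
    show Fbar (Ideal.Quotient.mk _ (MvPolynomial.X i)) = α (σ i)
    have h3 : Fbar (Ideal.Quotient.mk _ (MvPolynomial.X i)) = F (MvPolynomial.X i) := rfl
    rw [h3, hF]
    simp [rename_X]
  exact ⟨AlgEquiv.ofBijective φ φ.bijective, key⟩

open UniqueFactorizationMonoid in
lemma normalizedFactors_finset_prod {ι : Type*} (s : Finset ι) (f : ι → Polynomial k)
    (h : ∀ i ∈ s, (f i).Monic ∧ Irreducible (f i)) :
    UniqueFactorizationMonoid.normalizedFactors (∏ i ∈ s, f i) = s.val.map f := by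
  classical
  induction s using Finset.cons_induction with
  | empty => simp [UniqueFactorizationMonoid.normalizedFactors_one]
  | cons a s ha ih =>
    rw [Finset.prod_cons]
    have hfa := h a (Finset.mem_cons_self a s)
    have hs : ∀ i ∈ s, (f i).Monic ∧ Irreducible (f i) :=
      fun i hi => h i (Finset.mem_cons_of_mem hi)
    have hprod : (∏ i ∈ s, f i) ≠ 0 :=
      Finset.prod_ne_zero_iff.mpr fun i hi => (hs i hi).1.ne_zero
    rw [UniqueFactorizationMonoid.normalizedFactors_mul hfa.1.ne_zero hprod, ih hs,
      UniqueFactorizationMonoid.normalizedFactors_irreducible hfa.2, hfa.1.normalize_eq_self,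
      Finset.cons_val, Multiset.map_cons, Multiset.singleton_add]

end Aux

/-- if the resolvent is separable, each factor attached to a `G`-orbit `O` of
cosets is the image of a monic irreducible polynomial of `k[X]`, the resolvent is the product of
these factors, and the multiset of degrees of the monic irreducible factors of the resolvent
over `k` is the multiset of cardinalities of the orbits of `G` on `L/H`. -/
theorem resolvent_factorization_by_orbits
    (α : Fin n → K) (hinj : Function.Injective α)
    (hcoeff : ∀ m : ℕ, (∏ i : Fin n, (Polynomial.X - Polynomial.C (α i)) : K[X]).coeff m ∈
      (algebraMap k K).range)
    (hgen : Algebra.adjoin k (Set.range α) = ⊤)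
    (H L : Subgroup (Equiv.Perm (Fin n))) (hHL : H ≤ L) (hGL : galoisGroup k α ≤ L)
    (P : MvPolynomial (Fin n) k) (hstab : ∀ σ ∈ L, (rename ⇑σ P = P ↔ σ ∈ H))
    (β : (↥L ⧸ H.subgroupOf L) → K)
    (hβ : ∀ σ : ↥L, β (QuotientGroup.mk σ) =
      MvPolynomial.aeval α (rename ⇑(σ : Equiv.Perm (Fin n)) P))
    (hβinj : Function.Injective β) :
    (∀ O : MulAction.orbitRel.Quotient (↥((galoisGroup k α).subgroupOf L))
        (↥L ⧸ H.subgroupOf L),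
      ∃ q : Polynomial k, q.Monic ∧ Irreducible q ∧
        q.map (algebraMap k K) =
          ∏ C ∈ (Set.toFinite O.orbit).toFinset, (Polynomial.X - Polynomial.C (β C))) ∧
    ((∏ C ∈ (Set.toFinite (Set.univ : Set (↥L ⧸ H.subgroupOf L))).toFinset,
        (Polynomial.X - Polynomial.C (β C))) =
      ∏ O ∈ (Set.toFinite (Set.univ : Set (MulAction.orbitRel.Quotient
          (↥((galoisGroup k α).subgroupOf L)) (↥L ⧸ H.subgroupOf L)))).toFinset,
        ∏ C ∈ (Set.toFinite O.orbit).toFinset, (Polynomial.X - Polynomial.C (β C))) ∧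
    (∀ R₀ : Polynomial k, R₀.Monic →
      R₀.map (algebraMap k K) =
        (∏ C ∈ (Set.toFinite (Set.univ : Set (↥L ⧸ H.subgroupOf L))).toFinset,
          (Polynomial.X - Polynomial.C (β C))) →
      (UniqueFactorizationMonoid.normalizedFactors R₀).map Polynomial.natDegree =
        ((Set.toFinite (Set.univ : Set (MulAction.orbitRel.Quotient
            (↥((galoisGroup k α).subgroupOf L)) (↥L ⧸ H.subgroupOf L)))).toFinset.val).map
          (fun O => Nat.card O.orbit)) := by
  classical
  -- Galois setup
  have hsurj : Function.Surjective (MvPolynomial.aeval α : MvPolynomial (Fin n) k →ₐ[k] K) :=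
    aeval_surjective hgen
  set f : K[X] := ∏ i : Fin n, (Polynomial.X - Polynomial.C (α i)) with hf
  have hfm : f.Monic := monic_prod_of_monic _ _ fun i _ => monic_X_sub_C _
  have hlift : f ∈ Polynomial.lifts (algebraMap k K) :=
    (Polynomial.lifts_iff_coeff_lifts f).mpr fun m => hcoeff m
  obtain ⟨f₀, hfmap, hfdeg, hfmon⟩ := Polynomial.lifts_and_degree_eq_and_monic hlift hfm
  have hsplits : Polynomial.Splits (f₀.map (algebraMap k K)) := by
    rw [hfmap]
    exact Polynomial.Splits.prod fun i _ => Polynomial.Splits.X_sub_C _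
  have hroots : f₀.rootSet K = Set.range α := by
    ext x
    simp only [Polynomial.mem_rootSet, Polynomial.aeval_def, ← Polynomial.eval_map, hfmap]
    constructor
    · rintro ⟨-, hx⟩
      rw [hf, Polynomial.eval_prod, Finset.prod_eq_zero_iff] at hx
      obtain ⟨i, -, hi⟩ := hx
      simp only [Polynomial.eval_sub, Polynomial.eval_X, Polynomial.eval_C, sub_eq_zero] at hi
      exact ⟨i, hi.symm⟩
    · rintro ⟨i, rfl⟩
      refine ⟨hfmon.ne_zero, ?_⟩
      rw [hf, Polynomial.eval_prod]
      exact Finset.prod_eq_zero (Finset.mem_univ i) (by simp)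
  haveI hsf : f₀.IsSplittingField k K := ⟨hsplits, by rw [hroots, hgen]⟩
  have hsep : f₀.Separable := by
    rw [← Polynomial.separable_map (algebraMap k K), hfmap, hf]
    exact Polynomial.separable_prod_X_sub_C_iff.mpr hinj
  haveI : FiniteDimensional k K := Polynomial.IsSplittingField.finiteDimensional K f₀
  haveI : IsGalois k K := IsGalois.of_separable_splitting_field hsep
  have hfix : ∀ x : K, (∀ g : K ≃ₐ[k] K, g x = x) → x ∈ Set.range (algebraMap k K) := by
    intro x h
    have h2 : IntermediateField.fixedField (⊤ : Subgroup (K ≃ₐ[k] K)) = ⊥ :=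
      ((IsGalois.tfae (F := k) (E := K)).out 0 1).mp ‹IsGalois k K›
    have h3 : x ∈ IntermediateField.fixedField (⊤ : Subgroup (K ≃ₐ[k] K)) := fun g => h g.1
    rw [h2] at h3
    exact IntermediateField.mem_bot.mp h3
  -- every automorphism gives a permutation in the Galois group
  have hperm : ∀ g : K ≃ₐ[k] K, ∃ σ : Equiv.Perm (Fin n),
      σ ∈ galoisGroup k α ∧ ∀ i, g (α i) = α (σ i) := by
    intro g
    have hroot : ∀ i, ∃ j, g (α i) = α j := by
      intro i
      have h1 : Polynomial.aeval (α i) f₀ = 0 := by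
        rw [Polynomial.aeval_def, ← Polynomial.eval_map, hfmap, hf, Polynomial.eval_prod]
        exact Finset.prod_eq_zero (Finset.mem_univ i) (by simp)
      have h2 : Polynomial.aeval (g (α i)) f₀ = 0 := by
        have h3 := Polynomial.aeval_algHom_apply (g : K →ₐ[k] K) (α i) f₀
        rw [h1, map_zero] at h3
        exact h3
      rw [Polynomial.aeval_def, ← Polynomial.eval_map, hfmap, hf, Polynomial.eval_prod,
        Finset.prod_eq_zero_iff] at h2
      obtain ⟨j, -, hj⟩ := h2
      simp only [Polynomial.eval_sub, Polynomial.eval_X, Polynomial.eval_C, sub_eq_zero] at hj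
      exact ⟨j, hj⟩
    choose u hu using hroot
    have huinj : Function.Injective u := by
      intro i j hij
      apply hinj
      apply g.injective
      rw [hu i, hu j, hij]
    let σ : Equiv.Perm (Fin n) := Equiv.ofBijective u (Finite.injective_iff_bijective.mp huinj)
    have hgσ : ∀ i, g (α i) = α (σ i) := hu
    exact ⟨σ, mem_galoisGroup_of_algEquiv g hgσ, hgσ⟩
  -- key computation: automorphisms act on the β's through the action on cosets
  have hsmul : ∀ (s : ↥((galoisGroup k α).subgroupOf L)) (C : ↥L ⧸ H.subgroupOf L) (g : K ≃ₐ[k] K),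
      (∀ i, g (α i) = α ((((s : ↥L) : Equiv.Perm (Fin n))) i)) → g (β C) = β (s • C) := by
    intro s C g hg
    obtain ⟨τ, rfl⟩ := QuotientGroup.mk_surjective C
    rw [hβ τ, g_aeval_eq g hg, rename_rename]
    have h1 : s • (QuotientGroup.mk τ : ↥L ⧸ H.subgroupOf L) = QuotientGroup.mk ((s : ↥L) * τ) := rfl
    rw [h1, hβ ((s : ↥L) * τ)]
    have h2 : (⇑(((s : ↥L) : Equiv.Perm (Fin n))) ∘ ⇑((τ : ↥L) : Equiv.Perm (Fin n)))
        = ⇑((((s : ↥L) * τ : ↥L) : Equiv.Perm (Fin n))) := rfl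
    rw [h2]
  have claimA : ∀ g : K ≃ₐ[k] K, ∃ s : ↥((galoisGroup k α).subgroupOf L), ∀ C : ↥L ⧸ H.subgroupOf L, g (β C) = β (s • C) := by
    intro g
    obtain ⟨σ, hσG, hgσ⟩ := hperm g
    refine ⟨⟨⟨σ, hGL hσG⟩, Subgroup.mem_subgroupOf.mpr hσG⟩, fun C => hsmul _ C g hgσ⟩
  have claimB : ∀ (s : ↥((galoisGroup k α).subgroupOf L)) (C : ↥L ⧸ H.subgroupOf L), ∃ g : K ≃ₐ[k] K, g (β C) = β (s • C) := by
    intro s C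
    obtain ⟨g, hg⟩ := exists_algEquiv_of_mem_galoisGroup hgen (Subgroup.mem_subgroupOf.mp s.2)
    exact ⟨g, hsmul s C g hg⟩
  -- Part 1
  have part1 : ∀ O : MulAction.orbitRel.Quotient ↥((galoisGroup k α).subgroupOf L) (↥L ⧸ H.subgroupOf L),
      ∃ q : Polynomial k, q.Monic ∧ Irreducible q ∧
        q.map (algebraMap k K) =
          ∏ C ∈ (Set.toFinite O.orbit).toFinset, (Polynomial.X - Polynomial.C (β C)) := by
    intro O
    set t := (Set.toFinite O.orbit).toFinset with ht
    set Fo : K[X] := ∏ C ∈ t, (Polynomial.X - Polynomial.C (β C)) with hFo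
    have hFomon : Fo.Monic := monic_prod_of_monic _ _ fun _ _ => monic_X_sub_C _
    have hmem : ∀ {C : ↥L ⧸ H.subgroupOf L}, C ∈ t ↔ Quotient.mk'' C = O := by
      intro C
      rw [ht, Set.Finite.mem_toFinset, MulAction.orbitRel.Quotient.mem_orbit]
    have hsmul_mem : ∀ (s : ↥((galoisGroup k α).subgroupOf L)) {C : ↥L ⧸ H.subgroupOf L}, C ∈ t → s • C ∈ t := by
      intro s C hC
      rw [hmem] at hC ⊢
      rw [← hC]
      exact Quotient.sound' (MulAction.mem_orbit C s)
    -- invariance of coefficients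
    have hFog : ∀ g : K ≃ₐ[k] K, Fo.map (g : K →+* K) = Fo := by
      intro g
      obtain ⟨s, hsg⟩ := claimA g
      rw [hFo, Polynomial.map_prod]
      simp only [Polynomial.map_sub, Polynomial.map_X, Polynomial.map_C]
      have h1 : ∀ C ∈ t, (Polynomial.X - Polynomial.C ((g : K →+* K) (β C)))
          = Polynomial.X - Polynomial.C (β (s • C)) := by
        intro C _
        rw [show (g : K →+* K) (β C) = g (β C) from rfl, hsg C]
      rw [Finset.prod_congr rfl h1]
      apply Finset.prod_bij (fun C _ => s • C)
      · intro C hC; exact hsmul_mem s hC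
      · intro C₁ h₁ C₂ h₂ he; exact smul_left_cancel s he
      · intro C hC
        exact ⟨s⁻¹ • C, hsmul_mem s⁻¹ hC, smul_inv_smul s C⟩
      · intro C hC; rfl
    have hFolift : Fo ∈ Polynomial.lifts (algebraMap k K) := by
      rw [Polynomial.lifts_iff_coeff_lifts]
      intro m
      apply hfix
      intro g
      conv_rhs => rw [← hFog g]
      rw [Polynomial.coeff_map]
      rfl
    obtain ⟨q₀, hq₀map, -, hq₀mon⟩ :=
      Polynomial.lifts_and_degree_eq_and_monic hFolift hFomon
    -- the base point of the orbit
    have hC₀ : (Quotient.out O : ↥L ⧸ H.subgroupOf L) ∈ t := by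
      rw [hmem]
      exact Quotient.out_eq' O
    set C₀ : ↥L ⧸ H.subgroupOf L := Quotient.out O with hC₀def
    have hroot0 : Polynomial.aeval (β C₀) q₀ = 0 := by
      rw [Polynomial.aeval_def, ← Polynomial.eval_map, hq₀map, hFo, Polynomial.eval_prod]
      exact Finset.prod_eq_zero hC₀ (by simp)
    have hint : IsIntegral k (β C₀) := ⟨q₀, hq₀mon, by rwa [Polynomial.aeval_def] at hroot0⟩
    set m := minpoly k (β C₀) with hm
    have hm1 : m ∣ q₀ := minpoly.dvd k _ hroot0
    have hmne : m.map (algebraMap k K) ≠ 0 :=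
      Polynomial.map_ne_zero (minpoly.ne_zero hint)
    have hrootm : ∀ C ∈ t, Polynomial.aeval (β C) m = 0 := by
      intro C hC
      have h1 : (Quotient.mk'' C : MulAction.orbitRel.Quotient ↥((galoisGroup k α).subgroupOf L) (↥L ⧸ H.subgroupOf L)) = Quotient.mk'' C₀ := by
        rw [hmem.mp hC]
        exact (Quotient.out_eq' O).symm
      have h2 : C ∈ MulAction.orbit ↥((galoisGroup k α).subgroupOf L) C₀ := Quotient.exact' h1
      obtain ⟨s, hs⟩ := h2
      obtain ⟨g, hg⟩ := claimB s C₀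
      have h3 : β C = g (β C₀) := by rw [hg, ← hs]
      have h4 := Polynomial.aeval_algHom_apply (g : K →ₐ[k] K) (β C₀) m
      rw [minpoly.aeval, map_zero] at h4
      rw [h3]
      exact h4
    have hdvd2 : q₀ ∣ m := by
      rw [← Polynomial.map_dvd_map (algebraMap k K) (algebraMap k K).injective hq₀mon, hq₀map]
      have hnodup : (t.val.map β).Nodup := Multiset.Nodup.map hβinj t.nodup
      have hle : (t.val.map β) ≤ (m.map (algebraMap k K)).roots := by
        rw [Multiset.le_iff_count]
        intro a
        by_cases ha : a ∈ t.val.map β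
        · rw [Multiset.count_eq_one_of_mem hnodup ha]
          rw [Multiset.one_le_count_iff_mem]
          obtain ⟨C, hC, rfl⟩ := Multiset.mem_map.mp ha
          rw [Polynomial.mem_roots hmne, Polynomial.IsRoot.def, Polynomial.eval_map,
            ← Polynomial.aeval_def]
          exact hrootm C hC
        · rw [Multiset.count_eq_zero_of_notMem ha]
          exact Nat.zero_le _
      have hdvd3 := (Multiset.prod_X_sub_C_dvd_iff_le_roots hmne _).mpr hle
      rw [Multiset.map_map] at hdvd3
      exact hdvd3
    have hq₀m : q₀ = m :=
      Polynomial.eq_of_monic_of_associated hq₀mon (minpoly.monic hint)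
        (associated_of_dvd_dvd hdvd2 hm1)
    exact ⟨q₀, hq₀mon, hq₀m ▸ minpoly.irreducible hint, hq₀map⟩
  -- Part 2
  have hunivQ : (Set.toFinite (Set.univ : Set (↥L ⧸ H.subgroupOf L))).toFinset = (Finset.univ : Finset (↥L ⧸ H.subgroupOf L)) := by
    ext C; simp
  have hunivO : (Set.toFinite (Set.univ : Set (MulAction.orbitRel.Quotient ↥((galoisGroup k α).subgroupOf L) (↥L ⧸ H.subgroupOf L)))).toFinset
      = Finset.univ := by
    ext O; simp
  have part2 : (∏ C ∈ (Set.toFinite (Set.univ : Set (↥L ⧸ H.subgroupOf L))).toFinset,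
        (Polynomial.X - Polynomial.C (β C))) =
      ∏ O ∈ (Set.toFinite (Set.univ : Set (MulAction.orbitRel.Quotient ↥((galoisGroup k α).subgroupOf L) (↥L ⧸ H.subgroupOf L)))).toFinset,
        ∏ C ∈ (Set.toFinite O.orbit).toFinset, (Polynomial.X - Polynomial.C (β C)) := by
    rw [hunivQ, hunivO]
    rw [← Finset.prod_fiberwise Finset.univ (fun C : ↥L ⧸ H.subgroupOf L => (Quotient.mk'' C :
      MulAction.orbitRel.Quotient ↥((galoisGroup k α).subgroupOf L) (↥L ⧸ H.subgroupOf L))) (fun C => (Polynomial.X - Polynomial.C (β C)))]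
    apply Finset.prod_congr rfl
    intro O _
    apply Finset.prod_congr _ fun _ _ => rfl
    ext C
    simp only [Finset.mem_filter, Finset.mem_univ, true_and, Set.Finite.mem_toFinset,
      MulAction.orbitRel.Quotient.mem_orbit]
  -- Part 3
  refine ⟨part1, part2, ?_⟩
  intro R₀ hR₀mon hR₀map
  choose qf hqmon hqirr hqmap using part1
  have hR₀ : R₀ = ∏ O : MulAction.orbitRel.Quotient ↥((galoisGroup k α).subgroupOf L) (↥L ⧸ H.subgroupOf L), qf O := by
    apply Polynomial.map_injective (algebraMap k K) (algebraMap k K).injective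
    rw [hR₀map, part2, Polynomial.map_prod, hunivO]
    exact Finset.prod_congr rfl fun O _ => (hqmap O).symm
  have hnf : UniqueFactorizationMonoid.normalizedFactors R₀ =
      (Finset.univ.val : Multiset (MulAction.orbitRel.Quotient ↥((galoisGroup k α).subgroupOf L) (↥L ⧸ H.subgroupOf L))).map qf := by
    rw [hR₀]
    exact normalizedFactors_finset_prod _ _ fun O _ => ⟨hqmon O, hqirr O⟩
  rw [hnf, hunivO, Multiset.map_map]
  apply Multiset.map_congr rfl
  intro O _
  have h1 : (qf O).natDegree = (Set.toFinite O.orbit).toFinset.card := by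
    have h2 : ((qf O).map (algebraMap k K)).natDegree = (qf O).natDegree :=
      Polynomial.natDegree_map _
    rw [← h2, hqmap O]
    rw [Polynomial.natDegree_prod _ _ fun C _ => Polynomial.X_sub_C_ne_zero (β C)]
    simp [Polynomial.natDegree_X_sub_C]
  have h3 : Nat.card O.orbit = (Set.toFinite O.orbit).toFinset.card := by
    rw [Nat.card_coe_set_eq, Set.ncard_eq_toFinset_card _ (Set.toFinite O.orbit)]
  simp only [Function.comp_apply, h1, h3]
end
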